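/- Let p be a prime and k > 0 an even integer. Then in the p-adic numbers, \lim_{s \to \infty} S_k(p^s)/p^s = B_k. -/

import Mathlib

/-- For a prime `p` and even `k > 0`, in `ℚ_p` we have
`lim_{s → ∞} S_k(p^s)/p^s = B_k`. -/
theorem power_sum_tendsto_bernoulli (p : ℕ) [Fact p.Prime] (k : ℕ)
    (hk : Even k) (hk0 : 0 < k) :
    Filter.Tendsto
      (fun s : ℕ =>
        (∑ j ∈ Finset.range (p ^ s), (j : ℚ_[p]) ^ k) / (p : ℚ_[p]) ^ s)
      Filter.atTop (nhds ((bernoulli k : ℚ) : ℚ_[p])) := by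
  have hpprime : p.Prime := Fact.out
  have hp0 : (p : ℚ_[p]) ≠ 0 := Nat.cast_ne_zero.mpr hpprime.ne_zero
  have hk1 : ((k : ℚ_[p]) + 1) ≠ 0 := by
    exact_mod_cast (Nat.cast_ne_zero (R := ℚ_[p])).mpr (Nat.succ_ne_zero k)
  -- rewrite the function via Faulhaber's formula
  have hfun : ∀ s : ℕ,
      (∑ j ∈ Finset.range (p ^ s), (j : ℚ_[p]) ^ k) / (p : ℚ_[p]) ^ s
      = ∑ i ∈ Finset.range (k + 1),
          ((bernoulli i : ℚ_[p]) * ((k + 1).choose i) / (k + 1))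
            * ((p : ℚ_[p]) ^ (k - i)) ^ s := by
    intro s
    have h := sum_range_pow (p ^ s) k
    have h2 : (∑ j ∈ Finset.range (p ^ s), (j : ℚ_[p]) ^ k)
        = ∑ i ∈ Finset.range (k + 1),
            (bernoulli i : ℚ_[p]) * ((k + 1).choose i)
              * ((p : ℚ_[p]) ^ s) ^ (k + 1 - i) / (k + 1) := by
      have := congrArg (fun q : ℚ => (q : ℚ_[p])) h
      push_cast at this
      simpa using this
    rw [h2, Finset.sum_div]
    refine Finset.sum_congr rfl fun i hi => ?_
    have hik : i ≤ k := Nat.lt_succ_iff.mp (Finset.mem_range.mp hi)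
    have hsplit : k + 1 - i = (k - i) + 1 := by omega
    rw [hsplit, pow_succ, ← pow_mul, ← pow_mul]
    have hps : (p : ℚ_[p]) ^ s ≠ 0 := pow_ne_zero _ hp0
    field_simp
    ring
  simp only [hfun]
  have hlim : Filter.Tendsto
      (fun s : ℕ => ∑ i ∈ Finset.range (k + 1),
        ((bernoulli i : ℚ_[p]) * ((k + 1).choose i) / (k + 1))
          * ((p : ℚ_[p]) ^ (k - i)) ^ s)
      Filter.atTop
      (nhds (∑ i ∈ Finset.range (k + 1),
        if i = k then ((bernoulli k : ℚ) : ℚ_[p]) else 0)) := by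
    refine tendsto_finset_sum _ fun i hi => ?_
    have hik : i ≤ k := Nat.lt_succ_iff.mp (Finset.mem_range.mp hi)
    by_cases hieq : i = k
    · subst hieq
      simp only [Nat.sub_self, pow_zero, one_pow, mul_one, if_pos rfl]
      have : (bernoulli i : ℚ_[p]) * ((i + 1).choose i) / (i + 1)
          = ((bernoulli i : ℚ) : ℚ_[p]) := by
        rw [Nat.choose_succ_self_right]
        field_simp
        push_cast; ring
      rw [this]
      exact tendsto_const_nhds
    · rw [if_neg hieq]
      have hki : 1 ≤ k - i := by omega
      have hnorm : ‖(p : ℚ_[p]) ^ (k - i)‖ < 1 := by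
        rw [norm_pow, Padic.norm_p]
        calc ((p : ℝ)⁻¹) ^ (k - i) ≤ (p : ℝ)⁻¹ ^ 1 := by
              apply pow_le_pow_of_le_one (by positivity)
                (by
                  rw [inv_le_one_iff₀]
                  right
                  exact_mod_cast hpprime.one_lt.le) hki
          _ < 1 := by
              rw [pow_one, inv_lt_one_iff₀]
              right
              exact_mod_cast hpprime.one_lt
      have h0 : Filter.Tendsto (fun s : ℕ => ((p : ℚ_[p]) ^ (k - i)) ^ s)
          Filter.atTop (nhds 0) :=
        tendsto_pow_atTop_nhds_zero_of_norm_lt_one hnorm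
      simpa using h0.const_mul _
  have hsum : (∑ i ∈ Finset.range (k + 1),
      if i = k then ((bernoulli k : ℚ) : ℚ_[p]) else 0)
      = ((bernoulli k : ℚ) : ℚ_[p]) := by
    rw [Finset.sum_ite_eq' (Finset.range (k + 1)) k]
    simp
  rwa [hsum] at hlim
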